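/- If E is a trace-preserving positive linear map on operators over a finite-dimensional complex Hilbert space (in particular, a trace-preserving super-operator given by Kraus operators with Σ_i E_i†E_i = I), then the trace distance is non-increasing: D(E(ρ), E(σ)) ≤ D(ρ, σ) for all density operators ρ, σ. -/

import Mathlib

open Matrix
open scoped ComplexOrder

/-- `|A| = √(AᴴA)`. -/
noncomputable def matAbs {ι : Type*} [Fintype ι] [DecidableEq ι]
    (A : Matrix ι ι ℂ) : Matrix ι ι ℂ :=
  (Matrix.posSemidef_conjTranspose_mul_self A).1.eigenvectorUnitary.1 *
    diagonal ((↑) ∘ (√·) ∘ (Matrix.posSemidef_conjTranspose_mul_self A).1.eigenvalues) *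
    (star (Matrix.posSemidef_conjTranspose_mul_self A).1.eigenvectorUnitary : Matrix ι ι ℂ)

/-- Trace distance `D(ρ,σ) = (1/2) tr|ρ-σ|`. -/
noncomputable def traceDist {ι : Type*} [Fintype ι] [DecidableEq ι]
    (ρ σ : Matrix ι ι ℂ) : ℝ :=
  (1 / 2) * ((matAbs (ρ - σ)).trace).re

lemma psd_trace_nonneg {ι : Type*} [Fintype ι] [DecidableEq ι]
    {M : Matrix ι ι ℂ} (hM : M.PosSemidef) : 0 ≤ M.trace := by
  exact hM.trace_nonneg

open scoped MatrixOrder in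
lemma psd_mul_trace_nonneg {ι : Type*} [Fintype ι] [DecidableEq ι]
    {X Y : Matrix ι ι ℂ} (hX : X.PosSemidef) (hY : Y.PosSemidef) :
    0 ≤ (X * Y).trace := by
  have h1 : X = CFC.sqrt X * CFC.sqrt X := (CFC.sqrt_mul_sqrt_self X hX.nonneg).symm
  have h2 : (X * Y).trace = (CFC.sqrt X * Y * CFC.sqrt X).trace := by
    nth_rewrite 1 [h1]
    rw [Matrix.mul_assoc, Matrix.trace_mul_comm]
  rw [h2]
  have h3 : CFC.sqrt X * Y * CFC.sqrt X = (CFC.sqrt X)ᴴ * Y * CFC.sqrt X := by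
    rw [(CFC.sqrt_nonneg X).posSemidef.1.eq]
  rw [h3]
  exact psd_trace_nonneg (hY.conjTranspose_mul_mul_same (CFC.sqrt X))

open scoped MatrixOrder in
/-- Spectral package for a Hermitian matrix. -/
lemma herm_package {ι : Type*} [Fintype ι] [DecidableEq ι]
    {B : Matrix ι ι ℂ} (hB : B.IsHermitian) :
    ∃ P Q R : Matrix ι ι ℂ, P.PosSemidef ∧ Q.PosSemidef ∧ R.PosSemidef ∧
      (1 - R).PosSemidef ∧ B = P - Q ∧
      (matAbs B).trace = P.trace + Q.trace ∧ (R * B).trace = P.trace := by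
  set u : Matrix ι ι ℂ := (hB.eigenvectorUnitary : Matrix ι ι ℂ) with hu
  have hu1 : u * star u = 1 := (Matrix.mem_unitaryGroup_iff).mp hB.eigenvectorUnitary.2
  have hu2 : star u * u = 1 := (Matrix.mem_unitaryGroup_iff').mp hB.eigenvectorUnitary.2
  set lam := hB.eigenvalues with hlam
  -- the building blocks
  have conj_psd : ∀ d : ι → ℝ, (∀ i, 0 ≤ d i) →
      (u * Matrix.diagonal (fun i => (d i : ℂ)) * star u).PosSemidef := by
    intro d hd
    rw [Matrix.star_eq_conjTranspose]
    exact (Matrix.posSemidef_diagonal_iff.mpr (fun i => by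
      simpa using Complex.zero_le_real.mpr (hd i))).mul_mul_conjTranspose_same u
  have conj_trace : ∀ d : ι → ℂ, (u * Matrix.diagonal d * star u).trace
      = ∑ i, d i := by
    intro d
    rw [Matrix.trace_mul_cycle, hu2, Matrix.one_mul, Matrix.trace_diagonal]
  have conj_mul : ∀ d e : ι → ℂ,
      (u * Matrix.diagonal d * star u) * (u * Matrix.diagonal e * star u)
        = u * Matrix.diagonal (fun i => d i * e i) * star u := by
    intro d e
    have hmid : star u * (u * (Matrix.diagonal e * star u)) = Matrix.diagonal e * star u := by
      rw [← Matrix.mul_assoc, hu2, Matrix.one_mul]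
    calc (u * Matrix.diagonal d * star u) * (u * Matrix.diagonal e * star u)
        = u * Matrix.diagonal d * (star u * (u * (Matrix.diagonal e * star u))) := by
          simp [Matrix.mul_assoc]
      _ = u * Matrix.diagonal d * (Matrix.diagonal e * star u) := by rw [hmid]
      _ = u * Matrix.diagonal (fun i => d i * e i) * star u := by
          rw [← Matrix.mul_assoc, Matrix.mul_assoc u, Matrix.diagonal_mul_diagonal]
  have hco : (RCLike.ofReal ∘ lam : ι → ℂ) = fun i => ((lam i : ℝ) : ℂ) := by
    funext i; rfl
  have hspec : B = u * Matrix.diagonal (fun i => ((lam i : ℝ) : ℂ)) * star u := by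
    have h := hB.spectral_theorem
    rw [hco] at h
    exact h
  refine ⟨u * Matrix.diagonal (fun i => (↑(max (lam i) 0) : ℂ)) * star u,
          u * Matrix.diagonal (fun i => (↑(max (-lam i) 0) : ℂ)) * star u,
          u * Matrix.diagonal (fun i => (if 0 ≤ lam i then 1 else 0 : ℂ)) * star u,
          conj_psd _ (fun i => le_max_right _ _), conj_psd _ (fun i => le_max_right _ _),
          ?_, ?_, ?_, ?_, ?_⟩
  · have : (fun i => (if 0 ≤ lam i then 1 else 0 : ℂ))
        = fun i => ((if 0 ≤ lam i then 1 else 0 : ℝ) : ℂ) := by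
      funext i; split <;> simp
    rw [this]
    exact conj_psd _ (fun i => by split <;> norm_num)
  · have h1 : (1 : Matrix ι ι ℂ) = u * Matrix.diagonal (fun _ => (1:ℂ)) * star u := by
      rw [Matrix.diagonal_one, Matrix.mul_one, hu1]
    rw [h1, ← Matrix.sub_mul, ← Matrix.mul_sub, Matrix.diagonal_sub]
    have : (fun i => ((1:ℂ) - if 0 ≤ lam i then 1 else 0))
        = fun i => ((if 0 ≤ lam i then 0 else 1 : ℝ) : ℂ) := by
      funext i; split <;> simp
    rw [show (Matrix.diagonal fun i => ((1:ℂ) - if 0 ≤ lam i then 1 else 0))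
        = Matrix.diagonal (fun i => ((if 0 ≤ lam i then 0 else 1 : ℝ) : ℂ)) by rw [this]]
    exact conj_psd _ (fun i => by split <;> norm_num)
  · -- B = P - Q
    rw [← Matrix.sub_mul, ← Matrix.mul_sub, Matrix.diagonal_sub]
    have : (fun i => (↑(max (lam i) 0) : ℂ) - (↑(max (-lam i) 0) : ℂ))
        = RCLike.ofReal ∘ lam := by
      funext i
      have hm : max (lam i) 0 - max (-lam i) 0 = lam i := by
        rcases le_total (lam i) 0 with h | h
        · rw [max_eq_right h, max_eq_left (by linarith)]; ring
        · rw [max_eq_left h, max_eq_right (by linarith)]; ring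
      simp only [Function.comp_apply, ← Complex.ofReal_sub, hm]
      rfl
    rw [this, hco]
    exact hspec
  · -- trace of matAbs
    have habs : matAbs B = u * Matrix.diagonal (fun i => (↑(|lam i|) : ℂ)) * star u := by
      have hpsd : (u * Matrix.diagonal (fun i => (↑(|lam i|) : ℂ)) * star u).PosSemidef :=
        conj_psd _ (fun i => abs_nonneg _)
      have hsq : (u * Matrix.diagonal (fun i => (↑(|lam i|) : ℂ)) * star u) ^ 2 = Bᴴ * B := by
        rw [pow_two, conj_mul, hB.eq]
        rw [hspec, conj_mul]
        have hd : (fun i => (↑(|lam i|) : ℂ) * ↑(|lam i|))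
            = fun i => ((lam i : ℂ) * (lam i : ℂ)) := by
          funext i
          rw [← Complex.ofReal_mul, ← Complex.ofReal_mul, abs_mul_abs_self]
        rw [hd]
      have hBB := Matrix.posSemidef_conjTranspose_mul_self B
      have hm : matAbs B = CFC.sqrt (Bᴴ * B) := by
        rw [CFC.sqrt_eq_real_sqrt _ hBB.nonneg, cfcₙ_eq_cfc (hf0 := Real.sqrt_zero), hBB.1.cfc_eq]
        rfl
      rw [hm]
      exact CFC.sqrt_unique (by rw [← pow_two]; exact hsq) hpsd.nonneg
    rw [habs, conj_trace, conj_trace, conj_trace, ← Finset.sum_add_distrib]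
    congr 1
    funext i
    rw [← Complex.ofReal_add]
    congr 1
    rcases le_total (lam i) 0 with h | h
    · rw [abs_of_nonpos h, max_eq_right h, max_eq_left (by linarith)]; ring
    · rw [abs_of_nonneg h, max_eq_left h, max_eq_right (by linarith)]; ring
  · -- (R * B).trace = P.trace
    nth_rewrite 1 [hspec]
    rw [conj_mul, conj_trace, conj_trace]
    apply Finset.sum_congr rfl
    intro i _
    split
    · next h => rw [one_mul, max_eq_left h]
    · next h => rw [zero_mul, max_eq_right (le_of_not_ge h)]; norm_num

/-- A trace-preserving positive linear map does not increase the trace distance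
between density operators. -/
theorem traceDist_nonincreasing_under_tp_positive_map {n : ℕ}
    (E : Matrix (Fin n) (Fin n) ℂ →ₗ[ℂ] Matrix (Fin n) (Fin n) ℂ)
    (hpos : ∀ A : Matrix (Fin n) (Fin n) ℂ, A.PosSemidef → (E A).PosSemidef)
    (htp : ∀ A : Matrix (Fin n) (Fin n) ℂ, (E A).trace = A.trace)
    (ρ σ : Matrix (Fin n) (Fin n) ℂ)
    (hρ : ρ.PosSemidef ∧ ρ.trace = 1) (hσ : σ.PosSemidef ∧ σ.trace = 1) :
    traceDist (E ρ) (E σ) ≤ traceDist ρ σ := by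
  set A := ρ - σ with hA_def
  have hA : A.IsHermitian := hρ.1.1.sub hσ.1.1
  have htrA : A.trace = 0 := by
    rw [hA_def, Matrix.trace_sub, hρ.2, hσ.2, sub_self]
  obtain ⟨P, Q, R, hP, hQ, hR, hR', hPQ, habsA, -⟩ := herm_package hA
  set B := E ρ - E σ with hB_def
  have hBA : B = E P - E Q := by
    rw [hB_def, ← map_sub, ← hA_def, hPQ, map_sub]
  have hB : B.IsHermitian := by
    rw [hBA]; exact (hpos P hP).1.sub (hpos Q hQ).1
  have htrB : B.trace = 0 := by
    rw [hB_def, Matrix.trace_sub, htp, htp, ← Matrix.trace_sub, ← hA_def, htrA]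
  obtain ⟨P', Q', R', hP', hQ', hR2, hR2', hPQ', habsB, hRB⟩ := herm_package hB
  -- traces of the pieces
  have htrP_eq : P.trace = Q.trace := by
    have := htrA
    rw [hPQ, Matrix.trace_sub, sub_eq_zero] at this
    exact this
  have htrP'_eq : P'.trace = Q'.trace := by
    have := htrB
    rw [hPQ', Matrix.trace_sub, sub_eq_zero] at this
    exact this
  -- key inequality: P'.trace ≤ P.trace (in ℂ)
  have hkey : P'.trace ≤ P.trace := by
    have h1 : (R' * B).trace = (R' * E P).trace - (R' * E Q).trace := by
      rw [hBA, Matrix.mul_sub, Matrix.trace_sub]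
    have h2 : 0 ≤ (R' * E Q).trace := psd_mul_trace_nonneg hR2 (hpos Q hQ)
    have h3 : (R' * E P).trace ≤ (E P).trace := by
      have h4 : 0 ≤ ((1 - R') * E P).trace := psd_mul_trace_nonneg hR2' (hpos P hP)
      rw [Matrix.sub_mul, Matrix.one_mul, Matrix.trace_sub, sub_nonneg] at h4
      exact h4
    calc P'.trace = (R' * B).trace := hRB.symm
      _ = (R' * E P).trace - (R' * E Q).trace := h1
      _ ≤ (R' * E P).trace := sub_le_self _ h2
      _ ≤ (E P).trace := h3
      _ = P.trace := htp P
  -- conclude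
  have hfin : (matAbs B).trace ≤ (matAbs A).trace := by
    rw [habsA, habsB, ← htrP_eq, ← htrP'_eq]
    exact add_le_add hkey hkey
  have hre : ((matAbs B).trace).re ≤ ((matAbs A).trace).re := hfin.1
  unfold traceDist
  rw [← hB_def, ← hA_def]
  linarith [hre]
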